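/- Fix N ≥ 2 and γ > N-1, and let f : [0, π/2) → ℝ solve f'(λ) = -f(λ)² + (N-1) tan λ · f(λ) + γ/cos²λ with f(0)=0. Then f(λ) ≤ N √γ / cos λ for all λ ∈ [0, π/2). -/
import Mathlib

set_option maxHeartbeats 1000000

open Real Set Filter Topology

/-- For `N ≥ 2`, `γ > N-1` and `f` the Riccati solution with `f(0)=0`,
one has `f(λ) ≤ N √γ / cos λ` on `[0, π/2)`. -/
theorem riccati_upper_bound (N : ℕ) (hN : 2 ≤ N) (γ : ℝ) (hγ : (N:ℝ) - 1 < γ)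
    (f : ℝ → ℝ) (hf0 : f 0 = 0) (hfc : ContinuousOn f (Ico 0 (π/2)))
    (hf : ∀ lam ∈ Ioo (0:ℝ) (π/2),
      HasDerivAt f (-(f lam)^2 + ((N:ℝ) - 1) * Real.tan lam * f lam
        + γ / (Real.cos lam)^2) lam) :
    ∀ lam ∈ Ico (0:ℝ) (π/2), f lam ≤ (N:ℝ) * Real.sqrt γ / Real.cos lam := by
  have hN2 : (2:ℝ) ≤ (N:ℝ) := by exact_mod_cast hN
  have hγ1 : (1:ℝ) < γ := by linarith
  have ht1 : (1:ℝ) < Real.sqrt γ := by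
    have := Real.sqrt_lt_sqrt (by norm_num) hγ1
    simpa using this
  have ht2 : Real.sqrt γ ^ 2 = γ := Real.sq_sqrt (by linarith)
  set c : ℝ := (N:ℝ) * Real.sqrt γ with hc
  have hcpos : 0 < c := by nlinarith
  intro lam0 hlam0
  by_contra hcon
  push_neg at hcon
  have hlam0' : lam0 < π/2 := hlam0.2
  have hlam00 : 0 ≤ lam0 := hlam0.1
  have hsub : Icc 0 lam0 ⊆ Ico 0 (π/2) := fun x hx => ⟨hx.1, lt_of_le_of_lt hx.2 hlam0'⟩
  have hcos : ∀ x ∈ Ico (0:ℝ) (π/2), 0 < Real.cos x := fun x hx =>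
    Real.cos_pos_of_mem_Ioo ⟨by linarith [hx.1, Real.pi_pos], hx.2⟩
  set g : ℝ → ℝ := fun x => c / Real.cos x with hg
  set h : ℝ → ℝ := fun x => f x - g x with hh
  have hgc : ContinuousOn g (Icc 0 lam0) :=
    continuousOn_const.div (Real.continuous_cos.continuousOn)
      (fun x hx => (hcos x (hsub hx)).ne')
  have hhc : ContinuousOn h (Icc 0 lam0) := (hfc.mono hsub).sub hgc
  set S : Set ℝ := Icc 0 lam0 ∩ h ⁻¹' (Iic 0) with hSdef
  have hSclosed : IsClosed S :=
    hhc.preimage_isClosed_of_isClosed isClosed_Icc isClosed_Iic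
  have h0mem : (0:ℝ) ∈ S := by
    constructor
    · exact ⟨le_refl _, hlam00⟩
    · simp only [mem_preimage, mem_Iic, hh, hg]
      rw [hf0, Real.cos_zero]
      simp
      linarith
  have hbdd : BddAbove S := ⟨lam0, fun x hx => hx.1.2⟩
  set s : ℝ := sSup S with hs
  have hsS : s ∈ S := hSclosed.csSup_mem ⟨0, h0mem⟩ hbdd
  have hs0' : 0 ≤ s := hsS.1.1
  have hslam0 : s ≤ lam0 := hsS.1.2
  have hhs_le : h s ≤ 0 := hsS.2
  have hhlam0 : 0 < h lam0 := by
    simp only [hh, hg]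
    linarith [hcon]
  have hslt : s < lam0 := by
    rcases lt_or_eq_of_le hslam0 with h' | h'
    · exact h'
    · exfalso; rw [h'] at hhs_le; linarith
  -- generic contradiction: if eventually (in 𝓝[Ioc s lam0] s) h < 0, contradiction with sup
  have hkey : ¬ (∀ᶠ x in 𝓝[Ioc s lam0] s, h x < 0) := by
    intro hev
    have hne : (𝓝[Ioc s lam0] s).NeBot := by
      rw [← mem_closure_iff_nhdsWithin_neBot, closure_Ioc (ne_of_lt hslt)]
      exact ⟨le_refl _, hslt.le⟩
    have hmem : ∀ᶠ x in 𝓝[Ioc s lam0] s, x ∈ Ioc s lam0 := eventually_mem_nhdsWithin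
    obtain ⟨x, hx1, hx2⟩ := (hev.and hmem).exists
    have hxS : x ∈ S := ⟨⟨le_trans hs0' hx2.1.le, hx2.2⟩, le_of_lt hx1⟩
    have := le_csSup hbdd hxS
    linarith [hx2.1]
  -- first: h s = 0
  have hhs0 : h s = 0 := by
    by_contra hne
    have hlt : h s < 0 := lt_of_le_of_ne hhs_le hne
    have hcw : ContinuousWithinAt h (Icc 0 lam0) s := hhc s hsS.1
    have hev : ∀ᶠ x in 𝓝[Icc 0 lam0] s, h x < 0 := hcw.eventually_lt_const hlt
    exact hkey (hev.filter_mono (nhdsWithin_mono s (show Ioc s lam0 ⊆ Icc 0 lam0 from fun x hx => ⟨le_trans hs0' hx.1.le, hx.2⟩)))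
  have hspos : 0 < s := by
    rcases lt_or_eq_of_le hs0' with h' | h'
    · exact h'
    · exfalso
      have : h 0 < 0 := by
        simp only [hh, hg]; rw [hf0, Real.cos_zero]; simp; linarith
      rw [← h'] at hhs0; linarith
  have hsIoo : s ∈ Ioo (0:ℝ) (π/2) := ⟨hspos, lt_of_le_of_lt hslam0 hlam0'⟩
  have hcss : 0 < Real.cos s := hcos s ⟨hspos.le, hsIoo.2⟩
  have hfs : f s = c / Real.cos s := by
    have : f s - g s = 0 := hhs0
    simp only [hg] at this; linarith
  -- derivative of h at s
  have hgd : HasDerivAt g ((0 * Real.cos s - c * (-Real.sin s)) / Real.cos s ^ 2) s :=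
    (hasDerivAt_const s c).div (Real.hasDerivAt_cos s) hcss.ne'
  have hfd := hf s hsIoo
  have hhd : HasDerivAt h ((-(f s)^2 + ((N:ℝ) - 1) * Real.tan s * f s
      + γ / (Real.cos s)^2) - (0 * Real.cos s - c * (-Real.sin s)) / Real.cos s ^ 2) s :=
    hfd.sub hgd
  set D : ℝ := (-(f s)^2 + ((N:ℝ) - 1) * Real.tan s * f s
      + γ / (Real.cos s)^2) - (0 * Real.cos s - c * (-Real.sin s)) / Real.cos s ^ 2 with hD
  have hDneg : D < 0 := by
    have hsn0 : 0 ≤ Real.sin s := Real.sin_nonneg_of_nonneg_of_le_pi hspos.le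
      (by linarith [hsIoo.2, Real.pi_pos])
    have hsn1 : Real.sin s ≤ 1 := Real.sin_le_one s
    have hDeq : D = (-c^2 + ((N:ℝ)-2)*c*Real.sin s + γ) / Real.cos s ^ 2 := by
      rw [hD, hfs, Real.tan_eq_sin_div_cos]
      field_simp
      ring
    rw [hDeq]
    apply div_neg_of_neg_of_pos _ (by positivity)
    have hnum : ((N:ℝ)-2)*c*Real.sin s ≤ ((N:ℝ)-2)*c := by
      nlinarith [mul_nonneg (mul_nonneg (by linarith : (0:ℝ) ≤ (N:ℝ)-2) hcpos.le)
        (by linarith : (0:ℝ) ≤ 1 - Real.sin s)]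
    have htpos : (0:ℝ) < Real.sqrt γ := by linarith
    have hNN : (0:ℝ) < (N:ℝ)^2 - 1 := by nlinarith
    have e1 : c^2 = (N:ℝ)^2 * γ := by rw [hc, mul_pow, ht2]
    have e2 : ((N:ℝ)-2)*c = ((N:ℝ)^2-2*(N:ℝ)) * Real.sqrt γ := by rw [hc]; ring
    have a1 : ((N:ℝ)^2 - 2*(N:ℝ)) * Real.sqrt γ ≤ ((N:ℝ)^2 - 1) * Real.sqrt γ :=
      mul_le_mul_of_nonneg_right (by linarith) htpos.le
    have a2 : ((N:ℝ)^2 - 1) * Real.sqrt γ < ((N:ℝ)^2 - 1) * γ :=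
      mul_lt_mul_of_pos_left ((Real.sqrt_lt' (by linarith)).mpr (by nlinarith)) hNN
    nlinarith [hnum, e1, e2, a1, a2]
  -- slope argument
  have hslope := hasDerivAt_iff_tendsto_slope.mp hhd
  have hslope' : Tendsto (slope h s) (𝓝[>] s) (𝓝 D) :=
    hslope.mono_left (nhdsWithin_mono s (fun x hx => ne_of_gt hx))
  have hev : ∀ᶠ x in 𝓝[>] s, slope h s x < 0 := hslope'.eventually_lt_const hDneg
  have hIoc : Ioc s lam0 ∈ 𝓝[>] s := Ioc_mem_nhdsGT hslt
  apply hkey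
  have hev2 : ∀ᶠ x in 𝓝[Ioc s lam0] s, slope h s x < 0 :=
    hev.filter_mono (nhdsWithin_mono s (fun x hx => hx.1))
  have hmem2 : ∀ᶠ x in 𝓝[Ioc s lam0] s, x ∈ Ioc s lam0 := eventually_mem_nhdsWithin
  refine hev2.mp (hmem2.mono ?_)
  intro x hx hsl
  rw [slope_def_field, hhs0, sub_zero] at hsl
  have hxs : 0 < x - s := sub_pos.mpr hx.1
  rcases div_neg_iff.mp hsl with ⟨h1, h2⟩ | ⟨h1, h2⟩
  · linarith
  · linarith
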